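/- arXiv:1805.11860 — 5 statements merged into one kernel-verified Lean document; each statement's English description precedes it below -/
import Mathlib

section
/- Let N be a finite set of buses and E a set of edges (unordered pairs of distinct buses of N). Suppose real numbers v_i (for each bus i), W_{ij} and W_{ji} (for each edge {i,j}), δ_{i,ij} and δ_{j,ij} (for each edge {i,j}), and binary parameters α_{ij} ∈ {0,1} (for each edge {i,j}) satisfy: (1) v_i > 0 for every bus i; (2) W_{ij} ≥ 0 and W_{ij} = W_{ji} for every edge {i,j}; (3) δ_{i,ij} = 0 if α_{ij} = 0 and δ_{i,ij} = v_i if α_{ij} = 1, for every bus i incident to edge {i,j}; (4) for every edge {i,j} the 2×2 matrix R_{ij} = [[δ_{i,ij}, W_{ij}], [W_{ji}, δ_{j,ij}]] has rank at most 1 (equivalently, δ_{i,ij}·δ_{j,ij} − W_{ij}·W_{ji} = 0). Then there exists a unique pair of families (V, γ), with V_i a real number for each bus i and γ_{i,ij} a real number for each incident bus–edge pair, such that: V_i > 0 for all i; γ_{i,ij} = 0 if α_{ij} = 0 and γ_{i,ij} = V_i if α_{ij} = 1; and the lifting equations δ_{i,ij} = γ_{i,ij}², W_{ij} = γ_{i,ij}·γ_{j,ij},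 and v_i = V_i² hold. Moreover this unique pair is given explicitly by V_i = √(v_i) and γ_{i,ij} = √(δ_{i,ij}). -/
/-- A pair of families `(V, γ)` is a solution of the original (un-lifted) system:
`V i > 0` for every bus, `γ i j` is `0` when line `{i,j}` is disconnected and equals `V i`
when it is connected, and the lifting equations `δ = γ²`, `W = γᵢγⱼ`, `v = V²` hold. -/
def LiftedSol {ι : Type*} (E : ι → ι → Prop) (v : ι → ℝ) (W δ α : ι → ι → ℝ)
    (V : ι → ℝ) (γ : ι → ι → ℝ) : Prop :=
  (∀ i, 0 < V i) ∧
  (∀ i j, E i j → (α i j = 0 → γ i j = 0) ∧ (α i j = 1 → γ i j = V i)) ∧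
  (∀ i j, E i j → δ i j = (γ i j) ^ 2) ∧
  (∀ i j, E i j → W i j = γ i j * γ j i) ∧
  (∀ i, v i = (V i) ^ 2)

/-- Lemma 1 of the paper: existence, uniqueness, and the explicit square-root form
of the pair `(V, γ)` recovered from lifted variables `(v, δ, W)` satisfying the
positivity, symmetry, switching and rank-1 conditions. -/
theorem stmt_0 {ι : Type*} [Fintype ι]
    (E : ι → ι → Prop) (hEsymm : ∀ i j, E i j → E j i)
    (hEirr : ∀ i j, E i j → i ≠ j)
    (v : ι → ℝ) (W δ α : ι → ι → ℝ)
    (hα01 : ∀ i j, E i j → α i j = 0 ∨ α i j = 1)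
    (hαsymm : ∀ i j, E i j → α i j = α j i)
    (hv : ∀ i, 0 < v i)
    (hW0 : ∀ i j, E i j → 0 ≤ W i j)
    (hWsymm : ∀ i j, E i j → W i j = W j i)
    (hδ : ∀ i j, E i j → (α i j = 0 → δ i j = 0) ∧ (α i j = 1 → δ i j = v i))
    (hrank : ∀ i j, E i j → δ i j * δ j i - W i j * W j i = 0) :
    -- existence: the explicit square-root pair is a solution
    LiftedSol E v W δ α (fun i => Real.sqrt (v i)) (fun i j => Real.sqrt (δ i j)) ∧
    -- uniqueness: any two solutions coincide (on all buses and all incident bus–edge pairs)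
    (∀ V₁ γ₁ V₂ γ₂, LiftedSol E v W δ α V₁ γ₁ → LiftedSol E v W δ α V₂ γ₂ →
      (∀ i, V₁ i = V₂ i) ∧ (∀ i j, E i j → γ₁ i j = γ₂ i j)) ∧
    -- moreover, every solution is given explicitly by the square roots
    (∀ V γ, LiftedSol E v W δ α V γ →
      (∀ i, V i = Real.sqrt (v i)) ∧ (∀ i j, E i j → γ i j = Real.sqrt (δ i j))) := by
  have hδ0 : ∀ i j, E i j → 0 ≤ δ i j := by
    intro i j hij
    rcases hα01 i j hij with h | h
    · rw [(hδ i j hij).1 h]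
    · rw [(hδ i j hij).2 h]; exact (hv i).le
  have hex : LiftedSol E v W δ α (fun i => Real.sqrt (v i))
      (fun i j => Real.sqrt (δ i j)) := by
    refine ⟨fun i => Real.sqrt_pos.mpr (hv i), ?_, ?_, ?_, ?_⟩
    · intro i j hij
      constructor
      · intro h0; show Real.sqrt (δ i j) = 0
        rw [(hδ i j hij).1 h0, Real.sqrt_zero]
      · intro h1; show Real.sqrt (δ i j) = Real.sqrt (v i)
        rw [(hδ i j hij).2 h1]
    · intro i j hij
      exact (Real.sq_sqrt (hδ0 i j hij)).symm
    · intro i j hij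
      have hji := hEsymm i j hij
      have h1 : W i j * W i j = δ i j * δ j i := by
        calc W i j * W i j = W i j * W j i := by rw [← hWsymm i j hij]
          _ = δ i j * δ j i := by linarith [hrank i j hij]
      have : W i j = Real.sqrt (δ i j * δ j i) := by
        rw [show δ i j * δ j i = W i j * W i j from h1.symm,
          Real.sqrt_mul_self (hW0 i j hij)]
      show W i j = Real.sqrt (δ i j) * Real.sqrt (δ j i)
      rw [this, Real.sqrt_mul (hδ0 i j hij)]
    · intro i; exact (Real.sq_sqrt (hv i).le).symm
  have key : ∀ V γ, LiftedSol E v W δ α V γ →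
      (∀ i, V i = Real.sqrt (v i)) ∧ (∀ i j, E i j → γ i j = Real.sqrt (δ i j)) := by
    intro V γ ⟨hVpos, hγ, hδγ, hWγ, hvV⟩
    have hV : ∀ i, V i = Real.sqrt (v i) := by
      intro i
      rw [hvV i, Real.sqrt_sq (hVpos i).le]
    refine ⟨hV, fun i j hij => ?_⟩
    rcases hα01 i j hij with h | h
    · rw [(hγ i j hij).1 h, (hδ i j hij).1 h, Real.sqrt_zero]
    · rw [(hγ i j hij).2 h, (hδ i j hij).2 h, hV i]
  exact ⟨hex, fun V₁ γ₁ V₂ γ₂ h₁ h₂ =>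
    ⟨fun i => ((key V₁ γ₁ h₁).1 i).trans ((key V₂ γ₂ h₂).1 i).symm,
     fun i j hij => ((key V₁ γ₁ h₁).2 i j hij).trans ((key V₂ γ₂ h₂).2 i j hij).symm⟩,
    key⟩
end

section
/- Let N be a finite set of buses and E a set of edges (unordered pairs of distinct buses of N). Suppose real numbers v_i, W_{ij}, W_{ji}, δ_{i,ij}, δ_{j,ij} and binary parameters α_{ij} ∈ {0,1} satisfy: v_i > 0 for all buses i; W_{ij} ≥ 0 and W_{ij} = W_{ji} for every edge {i,j}; δ_{i,ij} = 0 if α_{ij} = 0 and δ_{i,ij} = v_i if α_{ij} = 1; and δ_{i,ij}·δ_{j,ij} − W_{ij}·W_{ji} = 0 for every edge {i,j} (the matrix R_{ij} = [[δ_{i,ij}, W_{ij}], [W_{ji}, δ_{j,ij}]] is rank-deficient). Define V_i := √(v_i) for every bus i and γ_{i,ij} := √(δ_{i,ij}) for every incident bus–edge pair. Then (V, γ) satisfies: V_i > 0 for all i; γ_{i,ij} = 0 if α_{ij} = 0 and γ_{i,ij} = V_i if α_{ij} = 1; δ_{i,ij} = γ_{i,ij}²; W_{ij} = γ_{i,ij}·γ_{j,ij};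 and v_i = V_i². In particular, W_{ij} = √(δ_{i,ij}·δ_{j,ij}) for every edge {i,j}. -/
/-- Existence part of Lemma 1 of the paper: setting `V i := √(v i)` and
`γ i j := √(δ i j)` yields a pair satisfying the original (un-lifted) constraints and
the lifting equations; in particular `W i j = √(δ i j · δ j i)` for every edge. -/
theorem stmt_1 {ι : Type*} [Fintype ι]
    (E : ι → ι → Prop) (hEsymm : ∀ i j, E i j → E j i)
    (hEirr : ∀ i j, E i j → i ≠ j)
    (v : ι → ℝ) (W δ α : ι → ι → ℝ)
    (hα01 : ∀ i j, E i j → α i j = 0 ∨ α i j = 1)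
    (hαsymm : ∀ i j, E i j → α i j = α j i)
    (hv : ∀ i, 0 < v i)
    (hW0 : ∀ i j, E i j → 0 ≤ W i j)
    (hWsymm : ∀ i j, E i j → W i j = W j i)
    (hδ : ∀ i j, E i j → (α i j = 0 → δ i j = 0) ∧ (α i j = 1 → δ i j = v i))
    (hrank : ∀ i j, E i j → δ i j * δ j i - W i j * W j i = 0) :
    -- V i > 0 for all buses
    (∀ i, 0 < Real.sqrt (v i)) ∧
    -- γ i j = 0 if the line is off, γ i j = V i if the line is on
    (∀ i j, E i j →
      (α i j = 0 → Real.sqrt (δ i j) = 0) ∧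
      (α i j = 1 → Real.sqrt (δ i j) = Real.sqrt (v i))) ∧
    -- the lifting equations hold
    (∀ i j, E i j → δ i j = (Real.sqrt (δ i j)) ^ 2) ∧
    (∀ i j, E i j → W i j = Real.sqrt (δ i j) * Real.sqrt (δ j i)) ∧
    (∀ i, v i = (Real.sqrt (v i)) ^ 2) ∧
    -- in particular W i j = √(δ i j · δ j i)
    (∀ i j, E i j → W i j = Real.sqrt (δ i j * δ j i)) := by
  have hδ0 : ∀ i j, E i j → 0 ≤ δ i j := by
    intro i j hij
    rcases hα01 i j hij with h | h
    · rw [(hδ i j hij).1 h]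
    · rw [(hδ i j hij).2 h]; exact (hv i).le
  have hWeq : ∀ i j, E i j → W i j = Real.sqrt (δ i j * δ j i) := by
    intro i j hij
    have h := hrank i j hij
    have hW : W i j * W j i = δ i j * δ j i := by linarith
    rw [← hWsymm i j hij] at hW
    have : Real.sqrt (δ i j * δ j i) = Real.sqrt (W i j * W i j) := by rw [hW]
    rw [this, Real.sqrt_mul_self (hW0 i j hij)]
  refine ⟨fun i => Real.sqrt_pos.2 (hv i), ?_, ?_, ?_, ?_, hWeq⟩
  · intro i j hij
    exact ⟨fun h => by rw [(hδ i j hij).1 h, Real.sqrt_zero],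
      fun h => by rw [(hδ i j hij).2 h]⟩
  · intro i j hij
    rw [Real.sq_sqrt (hδ0 i j hij)]
  · intro i j hij
    rw [hWeq i j hij, Real.sqrt_mul (hδ0 i j hij)]
  · intro i
    rw [Real.sq_sqrt (hv i).le]
end

section
/- Let D be a finite set of loads, M a positive integer, and level : D → {1, …, M} an assignment of a priority level to each load (smaller level number means higher priority). Let κ : {1, …, M} → ℝ assign a positive weighting factor to each priority level, and for each level r let φ_r denote the number of loads in D with level r. Assume that for every level m ∈ {1, …, M}, the weighting factors satisfy κ(m) > Σ_{r = m+1}^{M} φ_r · κ(r). Then for any level m₀ ∈ {1, …, M} and any two subsets S, T ⊆ D such that S contains at least one load of level m₀ and every load in T has level strictly greater than m₀, it holds that Σ_{i ∈ S} κ(level(i)) > Σ_{i ∈ T} κ(level(i)). Consequently, the survivability index Σ_{i ∈ S} κ(level(i)) / Σ_{i ∈ D} κ(level(i)) of any on/off configuration that switches on a load of some priority level is strictly greater than that of any configuration switching on only loads of strictly lower priority. -/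
/-- Priority property of the survivability index: if the weighting factor of each
priority level strictly exceeds the sum of the weighting factors of all loads of
strictly lower priority, then any load configuration containing a load of level `m₀`
has a strictly larger total weight (hence a strictly larger survivability index) than
any configuration consisting only of loads of strictly lower priority. -/
theorem stmt_3 {D : Type*} [Fintype D] (M : ℕ) (hM : 0 < M)
    (level : D → ℕ) (hlevel : ∀ i, 1 ≤ level i ∧ level i ≤ M)
    (κ : ℕ → ℝ) (hκpos : ∀ m, 1 ≤ m → m ≤ M → 0 < κ m)
    (hweight : ∀ m, 1 ≤ m → m ≤ M →
      κ m > ∑ r ∈ Finset.Icc (m + 1) M,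
        ((Finset.univ.filter fun i => level i = r).card : ℝ) * κ r) :
    ∀ m₀, 1 ≤ m₀ → m₀ ≤ M → ∀ S T : Finset D,
      (∃ i ∈ S, level i = m₀) → (∀ i ∈ T, m₀ < level i) →
      (∑ i ∈ S, κ (level i) > ∑ i ∈ T, κ (level i)) ∧
      ((∑ i ∈ S, κ (level i)) / (∑ i : D, κ (level i)) >
        (∑ i ∈ T, κ (level i)) / (∑ i : D, κ (level i))) := by
  intro m₀ hm₀1 hm₀M S T ⟨i₀, hi₀S, hi₀lvl⟩ hT
  have hpos : ∀ i : D, 0 < κ (level i) := fun i =>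
    hκpos _ (hlevel i).1 (hlevel i).2
  -- T sum ≤ sum over all loads with level in Icc (m₀+1) M
  have hTsub : T ⊆ Finset.univ.filter (fun i => level i ∈ Finset.Icc (m₀ + 1) M) := by
    intro i hi
    simp only [Finset.mem_filter, Finset.mem_univ, Finset.mem_Icc, true_and]
    exact ⟨hT i hi, (hlevel i).2⟩
  have h1 : ∑ i ∈ T, κ (level i)
      ≤ ∑ i ∈ Finset.univ.filter (fun i => level i ∈ Finset.Icc (m₀ + 1) M), κ (level i) :=
    Finset.sum_le_sum_of_subset_of_nonneg hTsub (fun i _ _ => (hpos i).le)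
  have h2 : ∑ i ∈ Finset.univ.filter (fun i => level i ∈ Finset.Icc (m₀ + 1) M), κ (level i)
      = ∑ r ∈ Finset.Icc (m₀ + 1) M,
        ((Finset.univ.filter fun i => level i = r).card : ℝ) * κ r := by
    rw [← Finset.sum_fiberwise_eq_sum_filter Finset.univ (Finset.Icc (m₀ + 1) M) level
      (fun i => κ (level i))]
    refine Finset.sum_congr rfl fun r _ => ?_
    rw [Finset.sum_congr rfl (fun i hi => by
      rw [(Finset.mem_filter.mp hi).2]), Finset.sum_const, nsmul_eq_mul]
  have h3 : κ m₀ ≤ ∑ i ∈ S, κ (level i) := by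
    calc κ m₀ = κ (level i₀) := by rw [hi₀lvl]
    _ ≤ ∑ i ∈ S, κ (level i) :=
      Finset.single_le_sum (fun i _ => (hpos i).le) hi₀S
  have hmain : ∑ i ∈ S, κ (level i) > ∑ i ∈ T, κ (level i) := by
    calc ∑ i ∈ T, κ (level i) ≤ _ := h1
    _ = _ := h2
    _ < κ m₀ := hweight m₀ hm₀1 hm₀M
    _ ≤ _ := h3
  refine ⟨hmain, ?_⟩
  have hden : 0 < ∑ i : D, κ (level i) := by
    have : (Finset.univ : Finset D).Nonempty := ⟨i₀, Finset.mem_univ _⟩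
    exact Finset.sum_pos (fun i _ => hpos i) this
  exact div_lt_div_of_pos_right hmain hden
end

section
/- Let y > 0 be a real number (a line admittance) and set z := 1/y. Let δ_i, δ_j, W be real numbers with δ_i > 0, δ_j ≥ 0, W ≥ 0, corresponding to a line {i, j} with symmetric lifted variables W_{ij} = W_{ji} = W. Define the branch-flow variables P_{ij} := (δ_i − W)·y, P_{ji} := (δ_j − W)·y, and l := y²·(δ_i − 2W + δ_j). Then: (i) P_{ij} + P_{ji} = z·l; (ii) δ_i − δ_j = z·(P_{ij} − P_{ji}); (iii) l·δ_i − P_{ij}² = y²·(δ_i·δ_j − W²). Consequently, the second-order cone inequality l ≥ P_{ij}²/δ_i holds if and only if δ_i·δ_j ≥ W², and equality l = P_{ij}²/δ_i holds if and only if δ_i·δ_j = W² (i.e., if and only if the matrix R_{ij} = [[δ_i, W], [W, δ_j]] has rank at most 1). -/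
/-- Algebraic identities of the branch-flow change of variables `g` and the exact
correspondence between the rank-1 condition `δᵢδⱼ = W²` and equality in the
second-order cone constraint `l ≥ Pᵢⱼ²/δᵢ`. -/
theorem stmt_4 (y z δi δj W Pij Pji l : ℝ)
    (hy : 0 < y) (hz : z = 1 / y)
    (hδi : 0 < δi) (hδj : 0 ≤ δj) (hW : 0 ≤ W)
    (hPij : Pij = (δi - W) * y)
    (hPji : Pji = (δj - W) * y)
    (hl : l = y ^ 2 * (δi - 2 * W + δj)) :
    -- (i)
    Pij + Pji = z * l ∧
    -- (ii)
    δi - δj = z * (Pij - Pji) ∧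
    -- (iii)
    l * δi - Pij ^ 2 = y ^ 2 * (δi * δj - W ^ 2) ∧
    -- consequently:
    (l ≥ Pij ^ 2 / δi ↔ δi * δj ≥ W ^ 2) ∧
    (l = Pij ^ 2 / δi ↔ δi * δj = W ^ 2) := by
  have hy' : y ≠ 0 := ne_of_gt hy
  have hδi' : δi ≠ 0 := ne_of_gt hδi
  have h3 : l * δi - Pij ^ 2 = y ^ 2 * (δi * δj - W ^ 2) := by
    subst hPij hl; ring
  have hy2 : (0:ℝ) < y ^ 2 := by positivity
  refine ⟨by subst hz hPij hPji hl; field_simp; ring,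
          by subst hz hPij hPji hl; field_simp; ring, h3, ?_, ?_⟩
  · rw [ge_iff_le, div_le_iff₀ hδi, ← sub_nonneg, h3, ge_iff_le,
      ← sub_nonneg (b := W ^ 2), mul_nonneg_iff_of_pos_left hy2]
  · rw [eq_comm, div_eq_iff hδi', eq_comm, ← sub_eq_zero, h3,
      mul_eq_zero, ← sub_eq_zero (a := δi * δj)]
    simp [ne_of_gt hy2]
end

section
/- Let N be a finite set of buses and E a set of edges, and suppose for each edge {i,j}: α_{ij} ∈ {0,1}, and real numbers V_i and γ_{i,ij} satisfy V_i > 0 for all buses i, γ_{i,ij} = 0 if α_{ij} = 0, and γ_{i,ij} = V_i if α_{ij} = 1. Define the lifted variables v_i := V_i², δ_{i,ij} := γ_{i,ij}², and W_{ij} := γ_{i,ij}·γ_{j,ij}. Then the lifted variables satisfy: v_i > 0 for all buses i; W_{ij} ≥ 0 and W_{ij} = W_{ji} for every edge; δ_{i,ij} = 0 if α_{ij} = 0 and δ_{i,ij} = v_i if α_{ij} = 1; the 2×2 matrix R_{ij} = [[δ_{i,ij}, W_{ij}], [W_{ji}, δ_{j,ij}]] is positive semidefinite and has determinant zero (rank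 at most 1) for every edge; and whenever α_{ij} = 1, R_{ij} has rank exactly 1. Moreover, for every edge, γ_{i,ij}·(γ_{i,ij} − γ_{j,ij})·y_{ij} = (δ_{i,ij} − W_{ij})·y_{ij} and y_{ij}²·(γ_{i,ij} − γ_{j,ij})² = y_{ij}²·(δ_{i,ij} − W_{ij} − W_{ji} + δ_{j,ij}) for any real admittance y_{ij}. -/
lemma aux_eq (a b : ℝ) :
    (!![a*a, a*b; b*a, b*b] : Matrix (Fin 2) (Fin 2) ℝ)
      = (!![a; b] : Matrix (Fin 2) (Fin 1) ℝ) * (!![a, b] : Matrix (Fin 1) (Fin 2) ℝ) := by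
  ext i j
  fin_cases i <;> fin_cases j <;>
    simp [Matrix.mul_apply, Fin.sum_univ_succ]

lemma aux_rank_le_one (a b : ℝ) :
    (!![a*a, a*b; b*a, b*b] : Matrix (Fin 2) (Fin 2) ℝ).rank ≤ 1 := by
  rw [aux_eq]
  calc ((!![a; b] : Matrix (Fin 2) (Fin 1) ℝ) * (!![a, b] : Matrix (Fin 1) (Fin 2) ℝ)).rank
      ≤ (!![a, b] : Matrix (Fin 1) (Fin 2) ℝ).rank := Matrix.rank_mul_le_right _ _
    _ ≤ Fintype.card (Fin 1) := Matrix.rank_le_card_height _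
    _ = 1 := by simp

lemma aux_rank_pos (a b : ℝ) (ha : a ≠ 0) :
    1 ≤ (!![a*a, a*b; b*a, b*b] : Matrix (Fin 2) (Fin 2) ℝ).rank := by
  by_contra h
  push_neg at h
  have h0 : (!![a*a, a*b; b*a, b*b] : Matrix (Fin 2) (Fin 2) ℝ).rank = 0 := by omega
  rw [Matrix.rank, Submodule.finrank_eq_zero, LinearMap.range_eq_bot] at h0
  have := congrFun (congrFun (congrArg DFunLike.coe h0) ![1, 0]) 0
  simp [Matrix.mulVecLin, Matrix.mulVec, dotProduct, Fin.sum_univ_two] at this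
  exact ha this

lemma aux_psd (a b : ℝ) :
    (!![a*a, a*b; b*a, b*b] : Matrix (Fin 2) (Fin 2) ℝ).PosSemidef := by
  refine Matrix.PosSemidef.of_dotProduct_mulVec_nonneg ?_ ?_
  · ext i j
    fin_cases i <;> fin_cases j <;> simp [Matrix.conjTranspose_apply, mul_comm]
  · intro x
    simp [Matrix.mulVec, dotProduct, Fin.sum_univ_two]
    nlinarith [sq_nonneg (a * x 0 + b * x 1)]

/-- Forward direction of the equivalence between the non-convex problem S1 and the
lifted problem SE1: the lifted variables `v = V²`, `δ = γ²`, `W = γᵢγⱼ` obtained from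
a feasible point of S1 satisfy the lifted constraints, the matrices `R_{ij}` are
positive semidefinite of rank at most 1 (rank exactly 1 on connected lines), and the
power-flow and current expressions coincide under the lifting. -/
theorem stmt_5 {ι : Type*} [Fintype ι]
    (E : ι → ι → Prop) (hEsymm : ∀ i j, E i j → E j i)
    (hEirr : ∀ i j, E i j → i ≠ j)
    (α : ι → ι → ℝ)
    (hα01 : ∀ i j, E i j → α i j = 0 ∨ α i j = 1)
    (hαsymm : ∀ i j, E i j → α i j = α j i)
    (V : ι → ℝ) (γ : ι → ι → ℝ)
    (hV : ∀ i, 0 < V i)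
    (hγ : ∀ i j, E i j → (α i j = 0 → γ i j = 0) ∧ (α i j = 1 → γ i j = V i))
    (v : ι → ℝ) (δ W : ι → ι → ℝ)
    (hv : ∀ i, v i = (V i) ^ 2)
    (hδ : ∀ i j, δ i j = (γ i j) ^ 2)
    (hW : ∀ i j, W i j = γ i j * γ j i) :
    -- v i > 0 for all buses
    (∀ i, 0 < v i) ∧
    -- W is nonnegative and symmetric on edges
    (∀ i j, E i j → 0 ≤ W i j ∧ W i j = W j i) ∧
    -- δ switching conditions
    (∀ i j, E i j → (α i j = 0 → δ i j = 0) ∧ (α i j = 1 → δ i j = v i)) ∧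
    -- R_{ij} is PSD with determinant zero (rank at most 1)
    (∀ i j, E i j →
      (!![δ i j, W i j; W j i, δ j i] : Matrix (Fin 2) (Fin 2) ℝ).PosSemidef ∧
      (!![δ i j, W i j; W j i, δ j i] : Matrix (Fin 2) (Fin 2) ℝ).det = 0 ∧
      (!![δ i j, W i j; W j i, δ j i] : Matrix (Fin 2) (Fin 2) ℝ).rank ≤ 1) ∧
    -- on connected lines, R_{ij} has rank exactly 1
    (∀ i j, E i j → α i j = 1 →
      (!![δ i j, W i j; W j i, δ j i] : Matrix (Fin 2) (Fin 2) ℝ).rank = 1) ∧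
    -- lifted power-flow and current expressions
    (∀ i j, E i j → ∀ y : ℝ,
      γ i j * (γ i j - γ j i) * y = (δ i j - W i j) * y ∧
      y ^ 2 * (γ i j - γ j i) ^ 2 = y ^ 2 * (δ i j - W i j - W j i + δ j i)) := by
  have hM : ∀ i j, (!![δ i j, W i j; W j i, δ j i] : Matrix (Fin 2) (Fin 2) ℝ)
      = !![γ i j * γ i j, γ i j * γ j i; γ j i * γ i j, γ j i * γ j i] := by
    intro i j
    rw [hδ, hδ, hW, hW]
    ext a b
    fin_cases a <;> fin_cases b <;> simp <;> ring
  refine ⟨?_, ?_, ?_, ?_, ?_, ?_⟩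
  · intro i; rw [hv]; exact pow_pos (hV i) 2
  · intro i j hij
    refine ⟨?_, by rw [hW, hW]; ring⟩
    rw [hW]
    rcases hα01 i j hij with h0 | h1
    · simp [(hγ i j hij).1 h0]
    · have h1' : α j i = 1 := by rw [← hαsymm i j hij]; exact h1
      rw [(hγ i j hij).2 h1, (hγ j i (hEsymm i j hij)).2 h1']
      exact le_of_lt (mul_pos (hV i) (hV j))
  · intro i j hij
    exact ⟨fun h0 => by rw [hδ, (hγ i j hij).1 h0]; ring,
           fun h1 => by rw [hδ, hv, (hγ i j hij).2 h1]⟩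
  · intro i j hij
    rw [hM]
    exact ⟨aux_psd _ _, by simp [Matrix.det_fin_two_of]; ring, aux_rank_le_one _ _⟩
  · intro i j hij h1
    rw [hM]
    have : γ i j ≠ 0 := by rw [(hγ i j hij).2 h1]; exact ne_of_gt (hV i)
    exact le_antisymm (aux_rank_le_one _ _) (aux_rank_pos _ _ this)
  · intro i j hij y
    rw [hδ, hδ, hW, hW]
    constructor <;> ring
end
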